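/- Let P ⊆ ℝ³ be the convex hull of the five points ρ₀ = (0,0,1), ρ₁ = (0,1,−1), ρ_u = (0,1,0), ρ_v = (−2,−1,0), ξ = (1,0,0) of ℤ³. Then P is a reflexive polytope: the origin lies in the interior of P, and the dual polytope P* = { u ∈ ℝ³ : ⟨u, v⟩ ≥ −1 for all v ∈ P } is the convex hull of a finite set of points of ℤ³. -/

import Mathlib

open Matrix

set_option maxHeartbeats 1000000

/-- The coordinatewise embedding `ℤ³ → ℝ³`. -/
def toR3 (v : Fin 3 → ℤ) : Fin 3 → ℝ := fun i => (v i : ℝ)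

lemma toR3_eq (a b c : ℤ) : toR3 ![a, b, c] = ![(a : ℝ), (b : ℝ), (c : ℝ)] := by
  funext i; fin_cases i <;> simp [toR3]

lemma vec6_at5 {α : Type*} (a b c d e f : α) : ![a, b, c, d, e, f] 5 = f := rfl

lemma cons_at5 {α : Type*} (a : α) (s : Fin 5 → α) : Matrix.vecCons a s 5 = s 4 := rfl
lemma cons_at4 {α : Type*} (a : α) (s : Fin 4 → α) : Matrix.vecCons a s 4 = s 3 := rfl
lemma cons_at3 {α : Type*} (a : α) (s : Fin 3 → α) : Matrix.vecCons a s 3 = s 2 := rfl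
lemma cons_at2 {α : Type*} (a : α) (s : Fin 2 → α) : Matrix.vecCons a s 2 = s 1 := rfl
lemma cons_at1 {α : Type*} (a : α) (s : Fin 1 → α) : Matrix.vecCons a s 1 = s 0 := rfl

lemma mem_convexHull_of_combo {n : ℕ} (s : Set (Fin 3 → ℝ)) (w : Fin n → ℝ)
    (z : Fin n → (Fin 3 → ℝ)) (hw : ∀ i, 0 ≤ w i) (hws : ∑ i, w i = 1)
    (hz : ∀ i, z i ∈ s) (u : Fin 3 → ℝ) (hu : u = ∑ i, w i • z i) :
    u ∈ convexHull ℝ s := by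
  rw [hu, ← Finset.centerMass_eq_of_sum_1 _ _ hws]
  exact Finset.centerMass_mem_convexHull _ (fun i _ => hw i) (by rw [hws]; norm_num)
    (fun i _ => hz i)

/-- The convex hull `P` of `(0,0,1)`, `(0,1,−1)`, `(0,1,0)`, `(−2,−1,0)`,
`(1,0,0)` is a reflexive polytope: the origin is an interior point of `P` and the dual
polytope `P* = {u : ⟨u,v⟩ ≥ −1 ∀ v ∈ P}` is the convex hull of finitely many lattice
points. -/
theorem example_polytope_is_reflexive
    (P : Set (Fin 3 → ℝ))
    (hP : P = convexHull ℝ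
      {toR3 ![0, 0, 1], toR3 ![0, 1, -1], toR3 ![0, 1, 0], toR3 ![-2, -1, 0], toR3 ![1, 0, 0]}) :
    (0 : Fin 3 → ℝ) ∈ interior P ∧
    ∃ S : Finset (Fin 3 → ℤ),
      {u : Fin 3 → ℝ | ∀ v ∈ P, -1 ≤ u ⬝ᵥ v} = convexHull ℝ (toR3 '' ↑S) := by
  have hdot : ∀ (u : Fin 3 → ℝ) (v : Fin 3 → ℝ),
      u ⬝ᵥ v = u 0 * v 0 + u 1 * v 1 + u 2 * v 2 := by
    intro u v
    simp [dotProduct, Fin.sum_univ_three]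
  rw [toR3_eq, toR3_eq, toR3_eq, toR3_eq, toR3_eq] at hP
  push_cast at hP
  constructor
  · -- interior part
    rw [mem_interior]
    refine ⟨{u : Fin 3 → ℝ | 0 < 1 - u 0 + 3*u 1 + 4*u 2} ∩
        {u | 0 < 1 - u 0 + 3*u 1 - u 2} ∩ {u | 0 < 1 - u 0 - 2*u 1 - u 2} ∩
        {u | 0 < 2 + 3*u 0 - 4*u 1 - 2*u 2}, ?_, ?_, ?_⟩
    · rintro u ⟨⟨⟨h1, h2⟩, h3⟩, h4⟩
      simp only [Set.mem_setOf_eq] at h1 h2 h3 h4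
      rw [hP]
      refine mem_convexHull_of_combo _
        ![(1 - u 0 + 3*u 1 + 4*u 2)/5, (1 - u 0 + 3*u 1 - u 2)/5, 0,
          (1 - u 0 - 2*u 1 - u 2)/5, (2 + 3*u 0 - 4*u 1 - 2*u 2)/5]
        ![![0, 0, 1], ![0, 1, -1], ![0, 1, 0], ![-2, -1, 0], ![1, 0, 0]]
        ?_ ?_ ?_ u ?_
      · intro i
        fin_cases i <;> simp <;> linarith
      · simp [Fin.sum_univ_five]; ring
      · intro i
        fin_cases i <;> simp [Set.mem_insert_iff]
      · funext j
        fin_cases j <;> simp [Fin.sum_univ_five, Matrix.vecHead, Matrix.vecTail] <;> ring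
    · refine IsOpen.inter (IsOpen.inter (IsOpen.inter ?_ ?_) ?_) ?_ <;>
        · apply isOpen_lt continuous_const
          continuity
    · refine ⟨⟨⟨?_, ?_⟩, ?_⟩, ?_⟩ <;> simp
  · -- dual polytope
    refine ⟨{![1, -1, -1], ![-1, -1, -1], ![-1, 3, -1], ![1, -1, 0], ![-1, -1, 0], ![-1, 3, 4]},
      ?_⟩
    have himg : toR3 '' ↑({![1, -1, -1], ![-1, -1, -1], ![-1, 3, -1], ![1, -1, 0],
        ![-1, -1, 0], ![-1, 3, 4]} : Finset (Fin 3 → ℤ)) =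
        ({![1, -1, -1], ![-1, -1, -1], ![-1, 3, -1], ![1, -1, 0], ![-1, -1, 0], ![-1, 3, 4]} :
          Set (Fin 3 → ℝ)) := by
      simp only [Finset.coe_insert, Finset.coe_singleton, Set.image_insert_eq,
        Set.image_singleton, toR3_eq]
      push_cast
      rfl
    rw [himg]
    -- intermediate H-description
    have hQ : {u : Fin 3 → ℝ | ∀ v ∈ P, -1 ≤ u ⬝ᵥ v} =
        {u : Fin 3 → ℝ | -1 ≤ u 2 ∧ -1 ≤ u 1 - u 2 ∧ -1 ≤ u 1 ∧ -1 ≤ -2*u 0 - u 1 ∧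
          -1 ≤ u 0} := by
      ext u
      simp only [Set.mem_setOf_eq]
      constructor
      · intro h
        have h1 := h (![0, 0, 1] : Fin 3 → ℝ)
          (by rw [hP]; exact subset_convexHull ℝ _ (by simp))
        have h2 := h (![0, 1, -1] : Fin 3 → ℝ)
          (by rw [hP]; exact subset_convexHull ℝ _ (by simp))
        have h3 := h (![0, 1, 0] : Fin 3 → ℝ)
          (by rw [hP]; exact subset_convexHull ℝ _ (by simp))
        have h4 := h (![-2, -1, 0] : Fin 3 → ℝ)
          (by rw [hP]; exact subset_convexHull ℝ _ (by simp))
        have h5 := h (![1, 0, 0] : Fin 3 → ℝ)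
          (by rw [hP]; exact subset_convexHull ℝ _ (by simp))
        rw [hdot] at h1 h2 h3 h4 h5
        norm_num [cons_at2, cons_at1] at h1 h2 h3 h4 h5
        refine ⟨by linarith, by linarith, by linarith, by linarith, by linarith⟩
      · rintro ⟨h1, h2, h3, h4, h5⟩ v hv
        rw [hP] at hv
        have hconv : Convex ℝ {v : Fin 3 → ℝ | -1 ≤ u ⬝ᵥ v} := by
          apply convex_halfSpace_ge
          exact ⟨fun a b => dotProduct_add u a b, fun c a => by
            rw [dotProduct_smul]⟩
        refine convexHull_min ?_ hconv hv
        rintro v (rfl | rfl | rfl | rfl | rfl) <;>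
          · rw [Set.mem_setOf_eq, hdot]; simp; linarith
    rw [hQ]
    apply le_antisymm
    · -- region ⊆ convex hull: explicit combination
      rintro u ⟨h1, h2, h3, h4, h5⟩
      have hy2 : (0:ℝ) < u 1 + 2 := by linarith
      obtain ⟨t, ht0, ht1, htz⟩ : ∃ t : ℝ, 0 ≤ t ∧ t ≤ 1 ∧ t * (u 1 + 2) = u 2 + 1 :=
        ⟨(u 2 + 1) / (u 1 + 2), div_nonneg (by linarith) (by linarith),
          by rw [div_le_one hy2]; linarith, div_mul_cancel₀ _ (ne_of_gt hy2)⟩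
      refine mem_convexHull_of_combo _
        ![(1-t)*(u 0+1)/2, (1-t)*(1-2*u 0-u 1)/4, (1-t)*(u 1+1)/4,
          t*(u 0+1)/2, t*(1-2*u 0-u 1)/4, t*(u 1+1)/4]
        ![![1, -1, -1], ![-1, -1, -1], ![-1, 3, -1], ![1, -1, 0], ![-1, -1, 0], ![-1, 3, 4]]
        ?_ ?_ ?_ u ?_
      · intro i
        fin_cases i <;>
          · simp [vec6_at5]
            apply div_nonneg (mul_nonneg (by linarith) (by linarith)) (by norm_num)
      · simp [Fin.sum_univ_six, vec6_at5]; ring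
      · intro i
        fin_cases i <;> simp [Set.mem_insert_iff, vec6_at5]
      · funext j
        fin_cases j
        · simp [Fin.sum_univ_six, vec6_at5, cons_at5, cons_at4, cons_at3, cons_at2, cons_at1,
            Matrix.vecHead, Matrix.vecTail]
          ring
        · simp [Fin.sum_univ_six, vec6_at5, cons_at5, cons_at4, cons_at3, cons_at2, cons_at1,
            Matrix.vecHead, Matrix.vecTail]
          ring
        · simp [Fin.sum_univ_six, vec6_at5, cons_at5, cons_at4, cons_at3, cons_at2, cons_at1,
            Matrix.vecHead, Matrix.vecTail]
          linear_combination -htz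
    · -- convex hull ⊆ region
      have hconv : Convex ℝ {u : Fin 3 → ℝ | -1 ≤ u 2 ∧ -1 ≤ u 1 - u 2 ∧ -1 ≤ u 1 ∧
          -1 ≤ -2*u 0 - u 1 ∧ -1 ≤ u 0} := by
        rintro p ⟨p1, p2, p3, p4, p5⟩ q ⟨q1, q2, q3, q4, q5⟩ a b ha hb hab
        simp only [Set.mem_setOf_eq, Pi.add_apply, Pi.smul_apply, smul_eq_mul]
        refine ⟨?_, ?_, ?_, ?_, ?_⟩ <;> nlinarith
      refine convexHull_min ?_ hconv
      rintro v (rfl | rfl | rfl | rfl | rfl | rfl) <;>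
        · refine ⟨?_, ?_, ?_, ?_, ?_⟩ <;> norm_num [cons_at2, cons_at1]
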